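/- If every directed cycle in the envy graph of an allocation X has nonpositive total weight, and π_i is defined as the maximum total weight over all simple directed paths originating at node i (with the empty path of weight 0 allowed), then π is the minimum total-payment vector among all nonnegative payment vectors making (X, π) envy-free; that is, Σ_i π_i minimizes Σ_i q_i over all q ≥ 0 with q_i − q_j ≥ v_i(X_j) − v_i(X_i) for all i, j. -/

import Mathlib

/-- Total weight of a walk (list of vertices) under edge weights `w`. -/
def walkWeight {V : Type*} (w : V → V → ℝ) : List V → ℝ
  | [] => 0
  | [_] => 0
  | a :: b :: l => w a b + walkWeight w (b :: l)

lemma walkWeight_cons_cons {V : Type*} (w : V → V → ℝ) (a b : V) (l : List V) :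
    walkWeight w (a :: b :: l) = w a b + walkWeight w (b :: l) := rfl

lemma walkWeight_split {V : Type*} (w : V → V → ℝ) :
    ∀ (p : List V) (a : V) (s : List V),
      walkWeight w (p ++ a :: s) = walkWeight w (p ++ [a]) + walkWeight w (a :: s)
  | [], a, s => by simp [walkWeight]
  | [x], a, s => by simp [walkWeight]
  | x :: y :: p, a, s => by
    have h := walkWeight_split w (y :: p) a s
    simp only [List.cons_append, walkWeight_cons_cons] at *
    linarith

lemma walkWeight_path_bound {V : Type*} (w : V → V → ℝ) (q : V → ℝ)
    (hq : ∀ i j, w i j ≤ q i - q j) :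
    ∀ (l : List V) (i : V), l.head? = some i → ∃ k, walkWeight w l ≤ q i - q k
  | [], i, h => by simp at h
  | [a], i, h => by
    simp only [List.head?_cons, Option.some.injEq] at h
    exact ⟨i, by simp [walkWeight, h]⟩
  | a :: b :: t, i, h => by
    simp only [List.head?_cons, Option.some.injEq] at h
    obtain ⟨k, hk⟩ := walkWeight_path_bound w q hq (b :: t) b rfl
    exact ⟨k, by rw [walkWeight_cons_cons, ← h]; have := hq a b; linarith⟩

/-- If the envy graph of `X` (with `v i j` the value of agent `i` for bundle
`j`) has no positive-weight directed cycle, and `π i` is the maximum total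
weight of a simple path starting at `i`, then `∑ π i` is the minimum total
payment over all nonnegative payment vectors making `(X, q)` envy-free. -/
theorem stmt10 {n : ℕ} (v : Fin n → Fin n → ℝ)
    (hcyc : ∀ (a : Fin n) (l : List (Fin n)), (a :: l).Nodup →
      walkWeight (fun i j => v i j - v i i) (a :: (l ++ [a])) ≤ 0)
    (π : Fin n → ℝ)
    (hπ : ∀ i, IsGreatest {x : ℝ | ∃ l : List (Fin n), l.Nodup ∧
      l.head? = some i ∧ x = walkWeight (fun i j => v i j - v i i) l} (π i)) :
    IsLeast {s : ℝ | ∃ q : Fin n → ℝ, (∀ i, 0 ≤ q i) ∧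
      (∀ i j, q i - q j ≥ v i j - v i i) ∧ s = ∑ i, q i} (∑ i, π i) := by
  set w : Fin n → Fin n → ℝ := fun i j => v i j - v i i with hw
  -- nonnegativity of π
  have hπ0 : ∀ i, 0 ≤ π i := fun i =>
    (hπ i).2 ⟨[i], by simp, rfl, by simp [walkWeight]⟩
  -- feasibility of π
  have hπfeas : ∀ i j, π i - π j ≥ v i j - v i i := by
    intro i j
    obtain ⟨l, hnd, hhd, heq⟩ := (hπ j).1
    by_cases hi : i ∈ l
    · obtain ⟨p, s, rfl⟩ := List.append_of_mem hi
      rw [List.nodup_append] at hnd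
      obtain ⟨hp, his, hdisj⟩ := hnd
      have hinp : i ∉ p := fun h => hdisj i h i (by simp) rfl
      have hIs : walkWeight w (i :: s) ≤ π i :=
        (hπ i).2 ⟨i :: s, his, rfl, rfl⟩
      have hsplit := walkWeight_split w p i s
      rcases p with _ | ⟨x, p'⟩
      · simp only [List.nil_append, List.head?_cons, Option.some.injEq] at hhd
        subst hhd
        simp
      · simp only [List.cons_append, List.head?_cons, Option.some.injEq] at hhd
        subst hhd
        have hcy := hcyc i (x :: p') (List.nodup_cons.mpr ⟨hinp, hp⟩)
        have hcons : walkWeight w (i :: ((x :: p') ++ [i])) =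
            w i x + walkWeight w ((x :: p') ++ [i]) := rfl
        rw [hcons] at hcy
        have h1 : w i x + π x ≤ π i := by
          rw [heq, hsplit]
          simp only [List.cons_append] at hcy ⊢
          linarith
        have h2 : v i x - v i i + π x ≤ π i := by simpa [hw] using h1
        linarith
    · have hmem : w i j + π j ≤ π i := by
        refine (hπ i).2 ⟨i :: l, List.nodup_cons.mpr ⟨hi, hnd⟩, rfl, ?_⟩
        match l, hhd with
        | a :: t, hhd =>
          simp only [List.head?_cons, Option.some.injEq] at hhd
          subst hhd
          rw [walkWeight_cons_cons, heq]
      have h2 : v i j - v i i + π j ≤ π i := by simpa [hw] using hmem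
      linarith
  constructor
  · exact ⟨π, hπ0, hπfeas, rfl⟩
  · rintro s ⟨q, hq0, hqf, rfl⟩
    refine Finset.sum_le_sum fun i _ => ?_
    obtain ⟨l, hnd, hhd, heq⟩ := (hπ i).1
    obtain ⟨k, hk⟩ := walkWeight_path_bound w q
      (fun a b => by have := hqf a b; simpa [hw] using this) l i hhd
    have := hq0 k
    rw [heq]; linarith
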